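/- arXiv:2410.05542 — 2 statements merged into one kernel-verified Lean document; each statement's English description precedes it below -/
import Mathlib

section
/- Fix an integer d with 2 ≤ d ≤ 7. Then for every c ∈ [0,1), every x ∈ S_{0,1,c} and every ε > 0, there exists an integer K such that for all k ≥ K: a_{c_g} − ε ≤ ψ^{(2k)}(x)_1 ≤ min(1, b_{c_g} + ε) and ψ^{(2k)}(x)_n ≤ min(1, c_g + ε) for all n ≥ 2. -/
/-- The map `ψ` on sequences of nonnegative reals (indices `n ≥ 1` are meaningful;
coordinate `0` is set to `0`). -/
noncomputable def psi (d : ℕ) (x : ℕ → ℝ) : ℕ → ℝ := fun n =>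
  if n = 0 then 0
  else if n = 1 then ((1 + x 1 + x 1 * x 2) / (1 + 2 * x 1)) ^ d
  else x (n - 1) ^ d *
    ((1 + x n + x n * x (n + 1)) / (1 + x (n - 1) + x (n - 1) * x n)) ^ d

/-- The set `S_{a,b,c}`. -/
def Sabc (a b c : ℝ) : Set (ℕ → ℝ) :=
  {x | (∀ n, 1 ≤ n → 0 ≤ x n) ∧ a ≤ x 1 ∧ x 1 ≤ b ∧ ∀ n, 2 ≤ n → x n ≤ c}

noncomputable def fMap (d : ℕ) (α x : ℝ) : ℝ := ((1 + α * x) / (1 + 2 * x)) ^ d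

noncomputable def gMap (d : ℕ) (b x : ℝ) : ℝ :=
  b ^ d * ((1 + x + x ^ 2) / (1 + b + b * x)) ^ d

/-- `i(c,x) = f(1, f(1+c, x))`. -/
noncomputable def iMap (d : ℕ) (c x : ℝ) : ℝ := fMap d 1 (fMap d (1 + c) x)

/-- `j(c,x) = f(1+c, f(1, x))`. -/
noncomputable def jMap (d : ℕ) (c x : ℝ) : ℝ := fMap d (1 + c) (fMap d 1 x)

open Set



/-- auxiliary: the map `G` -/
noncomputable def Gm (d : ℕ) (t : ℝ) : ℝ := ((1 + t + t^2) / (2 + t))^d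

lemma poly_bound (d : ℕ) (hd2 : 2 ≤ d) (hd7 : d ≤ 7) (s : ℝ) (hs : 0 ≤ s) :
    (d : ℝ) * s ^ (d - 1) ≤ 199/200 * (1 + 2 * s ^ d)^2 := by
  interval_cases d
  · norm_num
    nlinarith [sq_nonneg (s^2 - 1/6), sq_nonneg (s - 299/1000), hs]
  · norm_num
    nlinarith [sq_nonneg (s^3 - 1/4), mul_nonneg hs (sq_nonneg (s - 209/500)),
      sq_nonneg (s - 209/500), hs]
  · norm_num
    nlinarith [sq_nonneg (s^4 - 3/10), mul_nonneg (pow_nonneg hs 2) (sq_nonneg (s - 529/1000)),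
      mul_nonneg hs (sq_nonneg (s - 529/1000)), sq_nonneg (s - 529/1000), hs]
  · norm_num
    nlinarith [sq_nonneg (s^5 - 1/3), mul_nonneg (pow_nonneg hs 3) (sq_nonneg (s - 637/1000)),
      mul_nonneg (pow_nonneg hs 2) (sq_nonneg (s - 637/1000)),
      mul_nonneg hs (sq_nonneg (s - 637/1000)), sq_nonneg (s - 637/1000), hs]
  · norm_num
    nlinarith [sq_nonneg (s^6 - 5/14), mul_nonneg (pow_nonneg hs 4) (sq_nonneg (s - 373/500)),
      mul_nonneg (pow_nonneg hs 3) (sq_nonneg (s - 373/500)),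
      mul_nonneg (pow_nonneg hs 2) (sq_nonneg (s - 373/500)),
      mul_nonneg hs (sq_nonneg (s - 373/500)), sq_nonneg (s - 373/500), hs]
  · norm_num
    nlinarith [sq_nonneg (s^7 - 3/8), mul_nonneg (pow_nonneg hs 5) (sq_nonneg (s - 431/500)),
      mul_nonneg (pow_nonneg hs 4) (sq_nonneg (s - 431/500)),
      mul_nonneg (pow_nonneg hs 3) (sq_nonneg (s - 431/500)),
      mul_nonneg (pow_nonneg hs 2) (sq_nonneg (s - 431/500)),
      mul_nonneg hs (sq_nonneg (s - 431/500)), sq_nonneg (s - 431/500), hs]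

lemma H_lip (d : ℕ) (hd2 : 2 ≤ d) (hd7 : d ≤ 7) {s t : ℝ} (hs : 0 ≤ s) (ht : 0 ≤ t) :
    |(1 + 2 * t ^ d)⁻¹ - (1 + 2 * s ^ d)⁻¹| ≤ 199/100 * |t - s| := by
  have key : ∀ x ∈ Ici (0:ℝ), HasDerivWithinAt (fun z : ℝ => (1 + 2 * z ^ d)⁻¹)
      (-(2 * ((d : ℝ) * x ^ (d-1))) / (1 + 2 * x ^ d)^2) (Ici 0) x := by
    intro x hx
    have hpos : (0:ℝ) < 1 + 2 * x ^ d := by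
      have : (0:ℝ) ≤ x ^ d := pow_nonneg hx d
      linarith
    have h1 : HasDerivAt (fun z : ℝ => 1 + 2 * z ^ d) (2 * ((d:ℝ) * x ^ (d-1))) x := by
      simpa using ((hasDerivAt_pow d x).const_mul 2).const_add 1
    exact (h1.inv hpos.ne').hasDerivWithinAt
  have bound : ∀ x ∈ Ici (0:ℝ),
      ‖-(2 * ((d : ℝ) * x ^ (d-1))) / (1 + 2 * x ^ d)^2‖ ≤ 199/100 := by
    intro x hx
    have hx0 : (0:ℝ) ≤ x := hx
    have hpos : (0:ℝ) < (1 + 2 * x ^ d)^2 := by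
      have : (0:ℝ) ≤ x ^ d := pow_nonneg hx0 d
      nlinarith
    have hb := poly_bound d hd2 hd7 x hx0
    rw [Real.norm_eq_abs, abs_div, abs_neg]
    rw [abs_of_nonneg (by positivity : (0:ℝ) ≤ 2 * ((d:ℝ) * x ^ (d-1))),
      abs_of_nonneg hpos.le, div_le_iff₀ hpos]
    nlinarith
  have := Convex.norm_image_sub_le_of_norm_hasDerivWithin_le key bound (convex_Ici 0) hs ht
  simpa [Real.norm_eq_abs] using this

lemma fMap_eq (d : ℕ) (α y : ℝ) (hy : 0 ≤ y) :
    fMap d α y = ((α + (2 - α) * (1 + 2*y)⁻¹) / 2) ^ d := by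
  unfold fMap
  congr 1
  have h : (0:ℝ) < 1 + 2*y := by linarith
  field_simp
  ring

lemma fMap_nonneg (d : ℕ) {α y : ℝ} (hα : 0 ≤ α) (hy : 0 ≤ y) : 0 ≤ fMap d α y := by
  unfold fMap
  have h1 : (0:ℝ) ≤ 1 + α * y := by positivity
  have h2 : (0:ℝ) < 1 + 2 * y := by linarith
  positivity

lemma fMap_le_one (d : ℕ) {α y : ℝ} (hα0 : 0 ≤ α) (hα : α ≤ 2) (hy : 0 ≤ y) :
    fMap d α y ≤ 1 := by
  unfold fMap
  have h2 : (0:ℝ) < 1 + 2 * y := by linarith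
  have h1 : (0:ℝ) ≤ 1 + α * y := by positivity
  have hb : (1 + α * y) / (1 + 2 * y) ≤ 1 := by
    rw [div_le_one h2]; nlinarith
  calc ((1 + α * y) / (1 + 2 * y)) ^ d ≤ 1 ^ d :=
        pow_le_pow_left₀ (by positivity) hb d
    _ = 1 := one_pow d

lemma fMap_mono_alpha (d : ℕ) {α α' y : ℝ} (hα0 : 0 ≤ α) (h : α ≤ α') (hy : 0 ≤ y) :
    fMap d α y ≤ fMap d α' y := by
  unfold fMap
  have h2 : (0:ℝ) < 1 + 2 * y := by linarith
  have hb : (1 + α * y) ≤ (1 + α' * y) := by nlinarith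
  have hnum : (0:ℝ) ≤ 1 + α * y := by positivity
  exact pow_le_pow_left₀ (by positivity) (by gcongr) d

lemma fMap_anti (d : ℕ) {α y y' : ℝ} (hα0 : 0 ≤ α) (hα : α ≤ 2) (h0 : 0 ≤ y) (h : y ≤ y') :
    fMap d α y' ≤ fMap d α y := by
  unfold fMap
  have h2 : (0:ℝ) < 1 + 2 * y := by linarith
  have h2' : (0:ℝ) < 1 + 2 * y' := by linarith
  have hy' : (0:ℝ) ≤ y' := h0.trans h
  apply pow_le_pow_left₀ (div_nonneg (by positivity) h2'.le)
  rw [div_le_div_iff₀ h2' h2]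
  nlinarith

lemma step_contract (d : ℕ) (hd2 : 2 ≤ d) (hd7 : d ≤ 7) {α α' y y' : ℝ}
    (hα1 : 1 ≤ α) (hα2 : α ≤ 2) (hα1' : 1 ≤ α') (hα2' : α' ≤ 2)
    (hy0 : 0 ≤ y) (hy1 : y ≤ 1) (hy0' : 0 ≤ y') (hy1' : y' ≤ 1) :
    |(1 + 2 * fMap d α y)⁻¹ - (1 + 2 * fMap d α' y')⁻¹| ≤
      199/200 * (|α - α'| + |(1 + 2*y)⁻¹ - (1 + 2*y')⁻¹|) := by
  set u : ℝ := (1 + 2*y)⁻¹ with hu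
  set u' : ℝ := (1 + 2*y')⁻¹ with hu'
  have hyp : (0:ℝ) < 1 + 2*y := by linarith
  have hyp' : (0:ℝ) < 1 + 2*y' := by linarith
  have hu0 : 0 < u := by positivity
  have hu1 : u ≤ 1 := by rw [hu]; exact inv_le_one_of_one_le₀ (by linarith)
  have hu0' : 0 < u' := by positivity
  have hu1' : u' ≤ 1 := by rw [hu']; exact inv_le_one_of_one_le₀ (by linarith)
  set s : ℝ := (α + (2 - α) * u) / 2 with hsdef
  set s' : ℝ := (α' + (2 - α') * u') / 2 with hsdef'
  have hs0 : 0 ≤ s := by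
    rw [hsdef]
    have : 0 ≤ (2 - α) * u := mul_nonneg (by linarith) hu0.le
    linarith
  have hs0' : 0 ≤ s' := by
    rw [hsdef']
    have : 0 ≤ (2 - α') * u' := mul_nonneg (by linarith) hu0'.le
    linarith
  have e1 : fMap d α y = s ^ d := fMap_eq d α y hy0
  have e2 : fMap d α' y' = s' ^ d := fMap_eq d α' y' hy0'
  rw [e1, e2]
  have hlip := H_lip d hd2 hd7 hs0' hs0
  have hdist : |s - s'| ≤ (|α - α'| + |u - u'|) / 2 := by
    have hrep : s - s' = (α - α') * (1 - u') / 2 + (2 - α) * (u - u') / 2 := by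
      rw [hsdef, hsdef']; ring
    rw [hrep]
    have t1 : |(α - α') * (1 - u') / 2| ≤ |α - α'| / 2 := by
      rw [abs_div, abs_mul]
      have : |1 - u'| ≤ 1 := by rw [abs_le]; constructor <;> linarith
      have h2 : |(2:ℝ)| = 2 := by norm_num
      rw [h2]
      apply div_le_div_of_nonneg_right ?_ (by norm_num)
      · nlinarith [abs_nonneg (α - α')]
    have t2 : |(2 - α) * (u - u') / 2| ≤ |u - u'| / 2 := by
      rw [abs_div, abs_mul]
      have : |2 - α| ≤ 1 := by rw [abs_le]; constructor <;> linarith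
      have h2 : |(2:ℝ)| = 2 := by norm_num
      rw [h2]
      apply div_le_div_of_nonneg_right ?_ (by norm_num)
      · nlinarith [abs_nonneg (u - u')]
    calc |(α - α') * (1 - u') / 2 + (2 - α) * (u - u') / 2|
        ≤ |(α - α') * (1 - u') / 2| + |(2 - α) * (u - u') / 2| := abs_add_le _ _
      _ ≤ |α - α'| / 2 + |u - u'| / 2 := add_le_add t1 t2
      _ = (|α - α'| + |u - u'|) / 2 := by ring
  calc |(1 + 2 * s ^ d)⁻¹ - (1 + 2 * s' ^ d)⁻¹| ≤ 199/100 * |s - s'| := hlip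
    _ ≤ 199/100 * ((|α - α'| + |u - u'|) / 2) := by
        apply mul_le_mul_of_nonneg_left hdist (by norm_num)
    _ = 199/200 * (|α - α'| + |u - u'|) := by ring

lemma ratio_mono {u u' v v' w w' : ℝ} (hu0 : 0 ≤ u) (hv0 : 0 ≤ v) (hw0 : 0 ≤ w)
    (hu : u ≤ u') (hv : v ≤ v') (hw : w ≤ w') :
    u * (1 + v + v*w) / (1 + u + u*v) ≤ u' * (1 + v' + v'*w') / (1 + u' + u'*v') := by
  have hu0' : 0 ≤ u' := hu0.trans hu
  have hv0' : 0 ≤ v' := hv0.trans hv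
  have hw0' : 0 ≤ w' := hw0.trans hw
  have hd : (0:ℝ) < 1 + u + u*v := by positivity
  have hd' : (0:ℝ) < 1 + u' + u'*v' := by positivity
  rw [div_le_div_iff₀ hd hd']
  have hvw : v * w ≤ v' * w' := mul_le_mul hv hw hw0 hv0'
  have h1 : u * (1 + v + v*w) ≤ u' * (1 + v' + v'*w') := by
    nlinarith [mul_nonneg (sub_nonneg.2 hu) (by positivity : (0:ℝ) ≤ 1 + v + v*w),
      mul_nonneg hu0' (sub_nonneg.2 hv), mul_nonneg hu0' (sub_nonneg.2 hvw)]
  have h2 : (1 + v + v*w) * (1 + v') ≤ (1 + v' + v'*w') * (1 + v) := by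
    nlinarith [mul_nonneg (mul_nonneg hv0 hv0') (sub_nonneg.2 hw), sub_nonneg.2 hvw]
  nlinarith [mul_le_mul_of_nonneg_left h2 (mul_nonneg hu0 hu0'), h1,
    mul_nonneg hu0 hu0']

lemma psi_coord1 (d : ℕ) (x : ℕ → ℝ) : psi d x 1 = fMap d (1 + x 2) (x 1) := by
  have h : psi d x 1 = ((1 + x 1 + x 1 * x 2) / (1 + 2 * x 1)) ^ d := by
    simp [psi]
  rw [h, fMap]
  congr 2
  ring

lemma Gm_nonneg (d : ℕ) {t : ℝ} (ht : 0 ≤ t) : 0 ≤ Gm d t := by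
  unfold Gm
  positivity

lemma Gm_lt_one (d : ℕ) (hd2 : 2 ≤ d) {t : ℝ} (ht0 : 0 ≤ t) (ht1 : t < 1) : Gm d t < 1 := by
  unfold Gm
  have hb : (1 + t + t^2)/(2 + t) < 1 := by
    rw [div_lt_one (by linarith)]
    nlinarith
  calc ((1 + t + t^2)/(2 + t))^d < 1^d := by
        apply pow_lt_pow_left₀ hb (by positivity)
        omega
    _ = 1 := one_pow d

lemma Gm_base_lt_one {t : ℝ} (ht0 : 0 ≤ t) (ht1 : t < 1) : (1 + t + t^2)/(2 + t) < 1 := by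
  rw [div_lt_one (by linarith)]
  nlinarith

lemma Gm_monoOn (d : ℕ) {t t' : ℝ} (ht0 : 0 ≤ t) (h : t ≤ t') : Gm d t ≤ Gm d t' := by
  unfold Gm
  have ht0' : 0 ≤ t' := ht0.trans h
  apply pow_le_pow_left₀ (by positivity)
  rw [div_le_div_iff₀ (by linarith) (by linarith)]
  nlinarith [mul_nonneg ht0 ht0', sub_nonneg.2 h, mul_nonneg (mul_nonneg ht0 ht0') (sub_nonneg.2 h)]

lemma psi_mem (d : ℕ) (hd2 : 2 ≤ d) {c : ℝ} (hc0 : 0 ≤ c) (hc1 : c < 1) {x : ℕ → ℝ}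
    (hx : x ∈ Sabc 0 1 c) : psi d x ∈ Sabc 0 1 (Gm d c) := by
  obtain ⟨hpos, hx0, hx1, htail⟩ := hx
  have hx2c : x 2 ≤ c := htail 2 le_rfl
  have hx20 : 0 ≤ x 2 := hpos 2 (by norm_num)
  have hx10 : 0 ≤ x 1 := hpos 1 le_rfl
  -- coordinate 1 facts
  have hc1' : psi d x 1 = fMap d (1 + x 2) (x 1) := psi_coord1 d x
  have h1nonneg : 0 ≤ psi d x 1 := by
    rw [hc1']; exact fMap_nonneg d (by linarith) hx10
  have h1le : psi d x 1 ≤ 1 := by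
    rw [hc1']; exact fMap_le_one d (by linarith) (by linarith) hx10
  -- tail coordinates
  have htailnew : ∀ n, 2 ≤ n → psi d x n ≤ Gm d c ∧ 0 ≤ psi d x n := by
    intro n hn
    have hn0 : n ≠ 0 := by omega
    have hn1 : n ≠ 1 := by omega
    have hexp : psi d x n = (x (n-1) * ((1 + x n + x n * x (n+1)) /
        (1 + x (n-1) + x (n-1) * x n))) ^ d := by
      simp only [psi, if_neg hn0, if_neg hn1]
      rw [mul_pow]
    have hu0 : 0 ≤ x (n-1) := hpos (n-1) (by omega)
    have hv0 : 0 ≤ x n := hpos n (by omega)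
    have hw0 : 0 ≤ x (n+1) := hpos (n+1) (by omega)
    have hvc : x n ≤ c := htail n hn
    have hwc : x (n+1) ≤ c := htail (n+1) (by omega)
    have hdpos : (0:ℝ) < 1 + x (n-1) + x (n-1) * x n := by positivity
    have hbase0 : 0 ≤ x (n-1) * ((1 + x n + x n * x (n+1)) /
        (1 + x (n-1) + x (n-1) * x n)) := by positivity
    have hbase : x (n-1) * ((1 + x n + x n * x (n+1)) / (1 + x (n-1) + x (n-1) * x n))
        ≤ (1 + c + c^2) / (2 + c) := by
      rcases Nat.lt_or_ge n 3 with h3 | h3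
      · -- n = 2
        have hn2 : n = 2 := by omega
        subst hn2
        have hu1 : x 1 ≤ 1 := hx1
        have key := ratio_mono hx10 hv0 hw0 hu1 hvc hwc
        rw [mul_div_assoc] at key
        calc x (2-1) * ((1 + x 2 + x 2 * x 3) / (1 + x (2-1) + x (2-1) * x 2))
            = x 1 * ((1 + x 2 + x 2 * x 3) / (1 + x 1 + x 1 * x 2)) := by norm_num
          _ ≤ 1 * (1 + c + c*c) / (1 + 1 + 1*c) := key
          _ = (1 + c + c^2) / (2 + c) := by ring_nf
      · -- n ≥ 3
        have huc : x (n-1) ≤ c := htail (n-1) (by omega)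
        have key := ratio_mono hu0 hv0 hw0 huc hvc hwc
        rw [mul_div_assoc] at key
        have hcc : c * (1 + c + c*c) / (1 + c + c*c) = c := by
          rw [mul_div_assoc, div_self (by positivity)]
          ring
        have hc2 : c ≤ (1 + c + c^2) / (2 + c) := by
          rw [le_div_iff₀ (by linarith)]
          nlinarith
        calc x (n-1) * ((1 + x n + x n * x (n+1)) / (1 + x (n-1) + x (n-1) * x n))
            ≤ c * (1 + c + c*c) / (1 + c + c*c) := key
          _ = c := hcc
          _ ≤ (1 + c + c^2) / (2 + c) := hc2
    constructor
    · rw [hexp]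
      unfold Gm
      exact pow_le_pow_left₀ hbase0 hbase d
    · rw [hexp]
      exact pow_nonneg hbase0 d
  refine ⟨?_, h1nonneg, h1le, fun n hn => (htailnew n hn).1⟩
  intro n hn
  rcases Nat.lt_or_ge n 2 with h | h
  · have : n = 1 := by omega
    subst this; exact h1nonneg
  · exact (htailnew n h).2

lemma phi_convex_combo {x y a b : ℝ} (hx0 : 0 ≤ x) (hx1 : x ≤ 1) (hy0 : 0 ≤ y) (hy1 : y ≤ 1)
    (ha : 0 ≤ a) (hb : 0 ≤ b) (hab : a + b = 1) :
    (1 + (a*x+b*y) + (a*x+b*y)^2) / (2 + (a*x+b*y))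
      ≤ a * ((1 + x + x^2)/(2 + x)) + b * ((1 + y + y^2)/(2 + y)) := by
  have hdx : (0:ℝ) < 2 + x := by linarith
  have hdy : (0:ℝ) < 2 + y := by linarith
  have hdz : (0:ℝ) < 2 + (a*x+b*y) := by positivity
  have hb' : b = 1 - a := by linarith
  subst hb'
  have hsum : a * ((1 + x + x^2)/(2 + x)) + (1-a) * ((1 + y + y^2)/(2 + y))
      = (a*(1 + x + x^2)*(2 + y) + (1-a)*(1 + y + y^2)*(2 + x)) / ((2 + x)*(2 + y)) := by
    field_simp
  rw [hsum, div_le_div_iff₀ hdz (by positivity)]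
  nlinarith [mul_nonneg (mul_nonneg ha hb) (sq_nonneg (x - y))]

lemma Gm_convex_combo (d : ℕ) {x y a b : ℝ} (hx0 : 0 ≤ x) (hx1 : x ≤ 1) (hy0 : 0 ≤ y)
    (hy1 : y ≤ 1) (ha : 0 ≤ a) (hb : 0 ≤ b) (hab : a + b = 1) :
    Gm d (a*x+b*y) ≤ a * Gm d x + b * Gm d y := by
  unfold Gm
  have hdx : (0:ℝ) < 2 + x := by linarith
  have hdy : (0:ℝ) < 2 + y := by linarith
  have hdz : (0:ℝ) < 2 + (a*x+b*y) := by positivity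
  have h0 : (0:ℝ) ≤ (1 + (a*x+b*y) + (a*x+b*y)^2) / (2 + (a*x+b*y)) := by positivity
  have h1 : ((1 + (a*x+b*y) + (a*x+b*y)^2) / (2 + (a*x+b*y)))^d
      ≤ (a * ((1 + x + x^2)/(2 + x)) + b * ((1 + y + y^2)/(2 + y)))^d :=
    pow_le_pow_left₀ h0 (phi_convex_combo hx0 hx1 hy0 hy1 ha hb hab) d
  refine h1.trans ?_
  have hcv := (convexOn_pow (𝕜 := ℝ) d).2
    (mem_Ici.2 (by positivity : (0:ℝ) ≤ (1 + x + x^2)/(2 + x)))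
    (mem_Ici.2 (by positivity : (0:ℝ) ≤ (1 + y + y^2)/(2 + y))) ha hb hab
  simpa [smul_eq_mul] using hcv

lemma Gm_one (d : ℕ) : Gm d 1 = 1 := by
  unfold Gm
  norm_num

lemma poly_contra (d : ℕ) {s t : ℝ} (hst : s < t) (hs0 : 0 ≤ s)
    (h : ∀ r ∈ Icc s t, Gm d r = r) : False := by
  set P : Polynomial ℝ :=
    (1 + Polynomial.X + Polynomial.X ^ 2) ^ d - Polynomial.X * (2 + Polynomial.X) ^ d with hP
  have hroot : Icc s t ⊆ {x | P.IsRoot x} := by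
    intro r hr
    have hr0 : 0 ≤ r := hs0.trans hr.1
    have hden : (0:ℝ) < 2 + r := by linarith
    have h2 : ((1 + r + r^2)/(2 + r))^d = r := h r hr
    rw [div_pow, div_eq_iff (pow_ne_zero d hden.ne')] at h2
    simp only [Set.mem_setOf_eq, Polynomial.IsRoot, hP, Polynomial.eval_sub,
      Polynomial.eval_pow, Polynomial.eval_add, Polynomial.eval_mul, Polynomial.eval_one,
      Polynomial.eval_X, Polynomial.eval_ofNat]
    rw [h2]
    ring
  have hinf : {x | P.IsRoot x}.Infinite :=
    ((Set.infinite_coe_iff.mp (Set.Icc.infinite hst))).mono hroot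
  have hP0 : P = 0 := Polynomial.eq_zero_of_infinite_isRoot P hinf
  have he : P.eval 0 = 1 := by
    simp [hP]
  rw [hP0] at he
  simp at he

section GmSign

variable (d : ℕ) {cg : ℝ}

lemma left_weak (hcg1 : cg < 1) (hfix : Gm d cg = cg) :
    ∀ t, 0 ≤ t → t ≤ cg → t ≤ Gm d t := by
  intro t ht0 htc
  rcases eq_or_lt_of_le htc with h | h
  · subst h; rw [hfix]
  have htc1 : t < 1 := h.trans hcg1
  set a : ℝ := (1 - cg)/(1 - t) with hadef
  have ha0 : 0 < a := div_pos (by linarith) (by linarith)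
  have ha1 : a ≤ 1 := by
    rw [hadef, div_le_one (by linarith)]; linarith
  have hab : a + (1 - a) = 1 := by ring
  have hne : (1:ℝ) - t ≠ 0 := by linarith
  have hcomb : a * t + (1 - a) * 1 = cg := by
    rw [hadef]; field_simp; ring
  have hcv := Gm_convex_combo d ht0 htc1.le (by norm_num) (le_refl (1:ℝ)) ha0.le
    (by linarith) hab
  rw [hcomb, hfix, Gm_one] at hcv
  have : a * t ≤ a * Gm d t := by linarith [hcomb]
  exact le_of_mul_le_mul_left this ha0

lemma right_weak (hcg0 : 0 ≤ cg) (hcg1 : cg < 1) (hfix : Gm d cg = cg) :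
    ∀ t, cg ≤ t → t ≤ 1 → Gm d t ≤ t := by
  intro t htc ht1
  set a : ℝ := (1 - t)/(1 - cg) with hadef
  have ha0 : 0 ≤ a := div_nonneg (by linarith) (by linarith)
  have ha1 : a ≤ 1 := by
    rw [hadef, div_le_one (by linarith)]; linarith
  have hab : a + (1 - a) = 1 := by ring
  have hne : (1:ℝ) - cg ≠ 0 := by linarith
  have hcomb : a * cg + (1 - a) * 1 = t := by
    rw [hadef]; field_simp; ring
  have hcv := Gm_convex_combo d hcg0 hcg1.le (by norm_num) (le_refl (1:ℝ)) ha0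
    (by linarith) hab
  rw [hcomb, hfix, Gm_one] at hcv
  linarith [hcomb]

lemma left_strict (hcg0 : 0 < cg) (hcg1 : cg < 1) (hfix : Gm d cg = cg) :
    ∀ t, 0 ≤ t → t < cg → t < Gm d t := by
  intro t ht0 htc
  rcases lt_or_ge t (Gm d t) with h | h
  · exact h
  exfalso
  have heq : Gm d t = t := le_antisymm h (left_weak d hcg1 hfix t ht0 htc.le)
  apply poly_contra d htc ht0
  intro r hr
  obtain ⟨hrt, hrc⟩ := hr
  have hr0 : 0 ≤ r := ht0.trans hrt
  have hlow : r ≤ Gm d r := left_weak d hcg1 hfix r hr0 hrc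
  rcases eq_or_lt_of_le hrt with h1 | h1
  · rw [← h1, heq]
  rcases eq_or_lt_of_le hrc with h2 | h2
  · rw [h2, hfix]
  -- t < r < cg : r = a*t + (1-a)*cg
  set a : ℝ := (cg - r)/(cg - t) with hadef
  have ha0 : 0 ≤ a := div_nonneg (by linarith) (by linarith)
  have ha1 : a ≤ 1 := by
    rw [hadef, div_le_one (by linarith)]; linarith
  have hab : a + (1 - a) = 1 := by ring
  have hne : cg - t ≠ 0 := by linarith
  have hcomb : a * t + (1 - a) * cg = r := by
    rw [hadef]; field_simp; ring
  have hcv := Gm_convex_combo d ht0 (by linarith) hcg0.le hcg1.le ha0 (by linarith) hab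
  rw [hcomb, heq, hfix] at hcv
  rw [hcomb] at hcv
  exact le_antisymm hcv hlow

lemma right_strict (hcg0 : 0 < cg) (hcg1 : cg < 1) (hfix : Gm d cg = cg) :
    ∀ t, cg < t → t < 1 → Gm d t < t := by
  intro t htc ht1
  rcases lt_or_ge (Gm d t) t with h | h
  · exact h
  exfalso
  have heq : Gm d t = t :=
    le_antisymm (right_weak d hcg0.le hcg1 hfix t htc.le ht1.le) h
  apply poly_contra d htc hcg0.le
  intro r hr
  obtain ⟨hrc, hrt⟩ := hr
  have hr0 : 0 ≤ r := hcg0.le.trans hrc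
  have hup : Gm d r ≤ r := right_weak d hcg0.le hcg1 hfix r hrc (hrt.trans ht1.le)
  -- lower: use t = a*r + (1-a)*1
  set a : ℝ := (1 - t)/(1 - r) with hadef
  have hr1 : r < 1 := lt_of_le_of_lt hrt ht1
  have ha0 : 0 < a := div_pos (by linarith) (by linarith)
  have ha1 : a ≤ 1 := by
    rw [hadef, div_le_one (by linarith)]; linarith
  have hab : a + (1 - a) = 1 := by ring
  have hne : (1:ℝ) - r ≠ 0 := by linarith
  have hcomb : a * r + (1 - a) * 1 = t := by
    rw [hadef]; field_simp; ring
  have hcv := Gm_convex_combo d hr0 hr1.le (by norm_num) (le_refl (1:ℝ)) ha0.le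
    (by linarith) hab
  rw [hcomb, heq, Gm_one] at hcv
  have : a * r ≤ a * Gm d r := by linarith [hcomb]
  have hlow : r ≤ Gm d r := le_of_mul_le_mul_left this ha0
  exact le_antisymm hup hlow

end GmSign

lemma Gm_contOn (d : ℕ) {A : Set ℝ} (hA : ∀ t ∈ A, (0:ℝ) ≤ t) : ContinuousOn (Gm d) A := by
  unfold Gm
  apply ContinuousOn.pow
  apply ContinuousOn.div (by fun_prop) (by fun_prop)
  intro t ht
  have := hA t ht
  intro hc
  linarith

lemma Gm_iter_mem (d : ℕ) (hd2 : 2 ≤ d) {c : ℝ} (hc0 : 0 ≤ c) (hc1 : c < 1) :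
    ∀ k, 0 ≤ (Gm d)^[k] c ∧ (Gm d)^[k] c < 1 := by
  intro k
  induction k with
  | zero => exact ⟨hc0, hc1⟩
  | succ n ih =>
    rw [Function.iterate_succ_apply']
    exact ⟨Gm_nonneg d ih.1, Gm_lt_one d hd2 ih.1 ih.2⟩

lemma Gm_iter_conv (d : ℕ) (hd2 : 2 ≤ d) {cg : ℝ} (hcg0 : 0 < cg) (hcg1 : cg < 1)
    (hfix : Gm d cg = cg) {c : ℝ} (hc0 : 0 ≤ c) (hc1 : c < 1) {δ : ℝ} (hδ : 0 < δ) :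
    ∃ K : ℕ, ∀ k, K ≤ k → |(Gm d)^[k] c - cg| ≤ δ := by
  set m : ℕ → ℝ := fun k => (Gm d)^[k] c with hm
  have hms : ∀ k, m (k+1) = Gm d (m k) := by
    intro k; rw [hm]; simp [Function.iterate_succ_apply']
  rcases le_or_gt c cg with hle | hgt
  · -- from below: increasing, in [0, cg]
    have hmem : ∀ k, 0 ≤ m k ∧ m k ≤ cg := by
      intro k
      induction k with
      | zero => exact ⟨hc0, hle⟩
      | succ n ih =>
        rw [hms]
        refine ⟨Gm_nonneg d ih.1, ?_⟩
        calc Gm d (m n) ≤ Gm d cg := Gm_monoOn d ih.1 ih.2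
          _ = cg := hfix
    have hmono : ∀ k, m k ≤ m (k+1) := by
      intro k
      rw [hms]
      exact left_weak d hcg1 hfix (m k) (hmem k).1 (hmem k).2
    have hmono' : Monotone m := monotone_nat_of_le_succ hmono
    -- find K with m K ≥ cg - δ
    have hK : ∃ K, cg - δ ≤ m K := by
      rcases le_or_gt (cg - δ) 0 with h0 | h0
      · exact ⟨0, h0.trans (hmem 0).1⟩
      by_contra hno
      push_neg at hno
      have hS : IsCompact (Icc (0:ℝ) (cg - δ)) := isCompact_Icc
      have hSne : (Icc (0:ℝ) (cg - δ)).Nonempty := ⟨0, by constructor <;> linarith⟩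
      have hcont : ContinuousOn (fun t : ℝ => Gm d t - t) (Icc 0 (cg - δ)) := by
        apply ContinuousOn.sub (Gm_contOn d (fun t ht => ht.1)) continuousOn_id
      obtain ⟨t0, ht0S, hminOn⟩ := hS.exists_isMinOn hSne hcont
      set γ : ℝ := Gm d t0 - t0 with hγ
      have hγ0 : 0 < γ := by
        have := left_strict d hcg0 hcg1 hfix t0 ht0S.1 (by linarith [ht0S.2])
        linarith
      have hstep : ∀ k, m k + γ ≤ m (k+1) := by
        intro k
        have hkS : m k ∈ Icc (0:ℝ) (cg - δ) := ⟨(hmem k).1, (hno k).le⟩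
        have := isMinOn_iff.mp hminOn (m k) hkS
        rw [hms]
        linarith
      have hgrow : ∀ k, m 0 + k * γ ≤ m k := by
        intro k
        induction k with
        | zero => simp
        | succ n ih =>
          have := hstep n
          push_cast
          linarith
      obtain ⟨N, hN⟩ := exists_nat_gt ((cg - m 0) / γ)
      have h1 : m 0 + N * γ ≤ m N := hgrow N
      have h2 : m N ≤ cg := (hmem N).2
      have h3 : (cg - m 0) / γ < N := hN
      rw [div_lt_iff₀ hγ0] at h3
      linarith
    obtain ⟨K, hK⟩ := hK
    refine ⟨K, fun k hk => ?_⟩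
    have h1 : cg - δ ≤ m k := hK.trans (hmono' hk)
    have h2 : m k ≤ cg := (hmem k).2
    rw [abs_le]
    constructor <;> linarith
  · -- from above: decreasing, in [cg, c]
    have hmem : ∀ k, cg ≤ m k ∧ m k ≤ c := by
      intro k
      induction k with
      | zero => exact ⟨hgt.le, le_refl c⟩
      | succ n ih =>
        rw [hms]
        constructor
        · calc cg = Gm d cg := hfix.symm
            _ ≤ Gm d (m n) := Gm_monoOn d hcg0.le ih.1
        · calc Gm d (m n) ≤ m n :=
              right_weak d hcg0.le hcg1 hfix (m n) ih.1 (ih.2.trans hc1.le)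
            _ ≤ c := ih.2
    have hanti : ∀ k, m (k+1) ≤ m k := by
      intro k
      rw [hms]
      exact right_weak d hcg0.le hcg1 hfix (m k) (hmem k).1 ((hmem k).2.trans hc1.le)
    have hanti' : Antitone m := antitone_nat_of_succ_le hanti
    have hK : ∃ K, m K ≤ cg + δ := by
      rcases le_or_gt c (cg + δ) with h0 | h0
      · exact ⟨0, (hmem 0).2.trans h0⟩
      by_contra hno
      push_neg at hno
      have hS : IsCompact (Icc (cg + δ) c) := isCompact_Icc
      have hSne : (Icc (cg + δ) c).Nonempty := ⟨cg + δ, by constructor <;> linarith⟩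
      have hcont : ContinuousOn (fun t : ℝ => t - Gm d t) (Icc (cg + δ) c) := by
        apply ContinuousOn.sub continuousOn_id (Gm_contOn d (fun t ht => by
          have := ht.1; linarith))
      obtain ⟨t0, ht0S, hminOn⟩ := hS.exists_isMinOn hSne hcont
      set γ : ℝ := t0 - Gm d t0 with hγ
      have hγ0 : 0 < γ := by
        have := right_strict d hcg0 hcg1 hfix t0 (by linarith [ht0S.1]) (by
          have := ht0S.2; linarith)
        linarith
      have hstep : ∀ k, m (k+1) ≤ m k - γ := by
        intro k
        have hkS : m k ∈ Icc (cg + δ) c := ⟨(hno k).le, (hmem k).2⟩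
        have := isMinOn_iff.mp hminOn (m k) hkS
        rw [hms]
        linarith
      have hgrow : ∀ k, m k ≤ m 0 - k * γ := by
        intro k
        induction k with
        | zero => simp
        | succ n ih =>
          have := hstep n
          push_cast
          linarith
      obtain ⟨N, hN⟩ := exists_nat_gt ((m 0 - cg) / γ)
      have h1 : m N ≤ m 0 - N * γ := hgrow N
      have h2 : cg ≤ m N := (hmem N).1
      have h3 : (m 0 - cg) / γ < N := hN
      rw [div_lt_iff₀ hγ0] at h3
      linarith
    obtain ⟨K, hK⟩ := hK
    refine ⟨K, fun k hk => ?_⟩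
    have h1 : m k ≤ cg + δ := (hanti' hk).trans hK
    have h2 : cg ≤ m k := (hmem k).1
    rw [abs_le]
    constructor <;> linarith

lemma gMap_one_eq (d : ℕ) (t : ℝ) : gMap d 1 t = Gm d t := by
  unfold gMap Gm
  rw [one_pow, one_mul]
  congr 2
  ring

noncomputable def Lseq (d : ℕ) (c : ℝ) : ℕ → ℝ
  | 0 => 0
  | (k+1) => iMap d ((Gm d)^[2*k] c) (Lseq d c k)

noncomputable def Useq (d : ℕ) (c : ℝ) : ℕ → ℝ
  | 0 => 1
  | (k+1) => jMap d ((Gm d)^[2*k+1] c) (Useq d c k)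

lemma psi_iter_mem (d : ℕ) (hd2 : 2 ≤ d) {c : ℝ} (hc0 : 0 ≤ c) (hc1 : c < 1) {x : ℕ → ℝ}
    (hx : x ∈ Sabc 0 1 c) : ∀ k, (psi d)^[k] x ∈ Sabc 0 1 ((Gm d)^[k] c) := by
  intro k
  induction k with
  | zero => exact hx
  | succ n ih =>
    rw [Function.iterate_succ_apply', Function.iterate_succ_apply']
    exact psi_mem d hd2 (Gm_iter_mem d hd2 hc0 hc1 n).1 (Gm_iter_mem d hd2 hc0 hc1 n).2 ih

lemma Lseq_mem (d : ℕ) (hd2 : 2 ≤ d) {c : ℝ} (hc0 : 0 ≤ c) (hc1 : c < 1) :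
    ∀ k, 0 ≤ Lseq d c k ∧ Lseq d c k ≤ 1 := by
  intro k
  induction k with
  | zero => norm_num [Lseq]
  | succ n ih =>
    have hck := Gm_iter_mem d hd2 hc0 hc1 (2*n)
    show 0 ≤ iMap d ((Gm d)^[2*n] c) (Lseq d c n) ∧ _
    unfold iMap
    constructor
    · exact fMap_nonneg d (by norm_num) (fMap_nonneg d (by linarith [hck.1]) ih.1)
    · exact fMap_le_one d (by norm_num) (by norm_num)
        (fMap_nonneg d (by linarith [hck.1]) ih.1)

lemma Useq_mem (d : ℕ) (hd2 : 2 ≤ d) {c : ℝ} (hc0 : 0 ≤ c) (hc1 : c < 1) :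
    ∀ k, 0 ≤ Useq d c k ∧ Useq d c k ≤ 1 := by
  intro k
  induction k with
  | zero => norm_num [Useq]
  | succ n ih =>
    have hck := Gm_iter_mem d hd2 hc0 hc1 (2*n+1)
    show 0 ≤ jMap d ((Gm d)^[2*n+1] c) (Useq d c n) ∧ _
    unfold jMap
    constructor
    · exact fMap_nonneg d (by linarith [hck.1]) (fMap_nonneg d (by norm_num) ih.1)
    · exact fMap_le_one d (by linarith [hck.1]) (by linarith [hck.2])
        (fMap_nonneg d (by norm_num) ih.1)

lemma sandwich (d : ℕ) (hd2 : 2 ≤ d) {c : ℝ} (hc0 : 0 ≤ c) (hc1 : c < 1) {x : ℕ → ℝ}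
    (hx : x ∈ Sabc 0 1 c) :
    ∀ k, Lseq d c k ≤ (psi d)^[2*k] x 1 ∧ (psi d)^[2*k] x 1 ≤ Useq d c k := by
  intro k
  induction k with
  | zero =>
    show Lseq d c 0 ≤ x 1 ∧ x 1 ≤ Useq d c 0
    exact ⟨hx.2.1, by simpa [Useq] using hx.2.2.1⟩
  | succ n ih =>
    set X : ℕ → ℝ := (psi d)^[2*n] x with hX
    have hXmem : X ∈ Sabc 0 1 ((Gm d)^[2*n] c) := psi_iter_mem d hd2 hc0 hc1 hx (2*n)
    set c1 : ℝ := (Gm d)^[2*n] c with hc1def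
    set c2 : ℝ := (Gm d)^[2*n+1] c with hc2def
    have hc1mem := Gm_iter_mem d hd2 hc0 hc1 (2*n)
    have hc2mem := Gm_iter_mem d hd2 hc0 hc1 (2*n+1)
    set Y : ℕ → ℝ := psi d X with hY
    have hYmem : Y ∈ Sabc 0 1 c2 := by
      have : c2 = Gm d c1 := by rw [hc2def, hc1def, Function.iterate_succ_apply']
      rw [this]
      exact psi_mem d hd2 hc1mem.1 hc1mem.2 hXmem
    have hiter : (psi d)^[2*(n+1)] x = psi d Y := by
      rw [hY, hX]
      have h2 : 2*(n+1) = (2*n + 1) + 1 := by ring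
      rw [h2, Function.iterate_succ_apply', Function.iterate_succ_apply']
    rw [hiter]
    have hY1 : Y 1 = fMap d (1 + X 2) (X 1) := psi_coord1 d X
    have hpsiY1 : psi d Y 1 = fMap d (1 + Y 2) (Y 1) := psi_coord1 d Y
    -- facts
    have hX1mem : 0 ≤ X 1 ∧ X 1 ≤ 1 := ⟨hXmem.2.1, hXmem.2.2.1⟩
    have hX2mem : 0 ≤ X 2 ∧ X 2 ≤ c1 := ⟨hXmem.1 2 (by norm_num), hXmem.2.2.2 2 le_rfl⟩
    have hY2mem : 0 ≤ Y 2 ∧ Y 2 ≤ c2 := ⟨hYmem.1 2 (by norm_num), hYmem.2.2.2 2 le_rfl⟩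
    have hLn := Lseq_mem d hd2 hc0 hc1 n
    have hUn := Useq_mem d hd2 hc0 hc1 n
    constructor
    · -- lower bound
      show iMap d c1 (Lseq d c n) ≤ psi d Y 1
      rw [hpsiY1, hY1]
      unfold iMap
      have hinner : fMap d (1 + X 2) (X 1) ≤ fMap d (1 + c1) (Lseq d c n) := by
        calc fMap d (1 + X 2) (X 1) ≤ fMap d (1 + c1) (X 1) :=
              fMap_mono_alpha d (by linarith [hX2mem.1]) (by linarith [hX2mem.2]) hX1mem.1
          _ ≤ fMap d (1 + c1) (Lseq d c n) :=
              fMap_anti d (by linarith [hc1mem.1]) (by linarith [hc1mem.2]) hLn.1 ih.1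
      calc fMap d 1 (fMap d (1 + c1) (Lseq d c n))
          ≤ fMap d 1 (fMap d (1 + X 2) (X 1)) :=
            fMap_anti d (by norm_num) (by norm_num)
              (fMap_nonneg d (by linarith [hX2mem.1]) hX1mem.1) hinner
        _ ≤ fMap d (1 + Y 2) (fMap d (1 + X 2) (X 1)) :=
            fMap_mono_alpha d (by norm_num) (by linarith [hY2mem.1])
              (fMap_nonneg d (by linarith [hX2mem.1]) hX1mem.1)
    · -- upper bound
      show psi d Y 1 ≤ jMap d c2 (Useq d c n)
      rw [hpsiY1, hY1]
      unfold jMap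
      have hinner : fMap d 1 (Useq d c n) ≤ fMap d (1 + X 2) (X 1) := by
        calc fMap d 1 (Useq d c n) ≤ fMap d 1 (X 1) :=
              fMap_anti d (by norm_num) (by norm_num) hX1mem.1 ih.2
          _ ≤ fMap d (1 + X 2) (X 1) :=
              fMap_mono_alpha d (by norm_num) (by linarith [hX2mem.1]) hX1mem.1
      calc fMap d (1 + Y 2) (fMap d (1 + X 2) (X 1))
          ≤ fMap d (1 + c2) (fMap d (1 + X 2) (X 1)) :=
            fMap_mono_alpha d (by linarith [hY2mem.1]) (by linarith [hY2mem.2])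
              (fMap_nonneg d (by linarith [hX2mem.1]) hX1mem.1)
        _ ≤ fMap d (1 + c2) (fMap d 1 (Useq d c n)) :=
            fMap_anti d (by linarith [hc2mem.1]) (by linarith [hc2mem.2])
              (fMap_nonneg d (by norm_num) hUn.1) hinner

lemma uu_diff_le_one {y y' : ℝ} (hy0 : 0 ≤ y) (hy0' : 0 ≤ y') :
    |(1 + 2*y)⁻¹ - (1 + 2*y')⁻¹| ≤ 1 := by
  have h1 : (0:ℝ) < 1 + 2*y := by linarith
  have h1' : (0:ℝ) < 1 + 2*y' := by linarith
  have h2 : (1 + 2*y)⁻¹ ≤ 1 := inv_le_one_of_one_le₀ (by linarith)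
  have h2' : (1 + 2*y')⁻¹ ≤ 1 := inv_le_one_of_one_le₀ (by linarith)
  have h3 : 0 < (1 + 2*y)⁻¹ := inv_pos.2 h1
  have h3' : 0 < (1 + 2*y')⁻¹ := inv_pos.2 h1'
  rw [abs_le]
  constructor <;> linarith

lemma dist_of_uu {y y' : ℝ} (hy0 : 0 ≤ y) (hy1 : y ≤ 1) (hy0' : 0 ≤ y') (hy1' : y' ≤ 1) :
    |y - y'| ≤ 9/2 * |(1 + 2*y)⁻¹ - (1 + 2*y')⁻¹| := by
  have h1 : (0:ℝ) < 1 + 2*y := by linarith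
  have h1' : (0:ℝ) < 1 + 2*y' := by linarith
  have hid : (1 + 2*y)⁻¹ - (1 + 2*y')⁻¹ = 2*(y' - y) / ((1 + 2*y)*(1 + 2*y')) := by
    field_simp
    ring
  rw [hid, abs_div]
  have hPpos : (0:ℝ) < (1 + 2*y)*(1 + 2*y') := by positivity
  have hP9 : (1 + 2*y)*(1 + 2*y') ≤ 9 := by nlinarith
  rw [abs_of_pos hPpos]
  have hnum : |2*(y' - y)| = 2 * |y - y'| := by
    rw [abs_mul, abs_sub_comm]
    norm_num
  rw [hnum]
  have hr : 9/2 * (2 * |y - y'| / ((1 + 2*y)*(1 + 2*y'))) = 9 * |y - y'| / ((1 + 2*y)*(1 + 2*y')) := by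
    ring
  rw [hr, le_div_iff₀ hPpos]
  nlinarith [abs_nonneg (y - y')]

lemma decay (Λ : ℝ) (hΛ0 : 0 ≤ Λ) (hΛ1 : Λ < 1) (a e : ℕ → ℝ)
    (ha1 : ∀ k, a k ≤ 1)
    (hrec : ∀ k, a (k+1) ≤ Λ * a k + e k) {δ : ℝ} (hδ : 0 < δ)
    (K1 : ℕ) (he : ∀ k, K1 ≤ k → e k ≤ (1-Λ)*δ/2) :
    ∃ K, ∀ k, K ≤ k → a k ≤ δ := by
  have hstep : ∀ m, a (K1 + m) ≤ Λ^m + δ/2 := by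
    intro m
    induction m with
    | zero =>
      simpa using by linarith [ha1 K1, hδ]
    | succ n ih =>
      have h1 := hrec (K1 + n)
      have h2 := he (K1 + n) (Nat.le_add_right _ _)
      have h3 : Λ * a (K1 + n) ≤ Λ * (Λ^n + δ/2) := mul_le_mul_of_nonneg_left ih hΛ0
      have : K1 + (n+1) = (K1 + n) + 1 := by omega
      rw [this]
      calc a ((K1 + n) + 1) ≤ Λ * a (K1 + n) + e (K1 + n) := h1
        _ ≤ Λ * (Λ^n + δ/2) + (1-Λ)*δ/2 := by linarith
        _ = Λ^(n+1) + δ/2 := by ring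
  obtain ⟨M, hM⟩ := exists_pow_lt_of_lt_one (half_pos hδ) hΛ1
  refine ⟨K1 + M, fun k hk => ?_⟩
  have hkk : k = K1 + (M + (k - (K1 + M))) := by omega
  rw [hkk]
  calc a (K1 + (M + (k - (K1 + M)))) ≤ Λ^(M + (k - (K1 + M))) + δ/2 := hstep _
    _ ≤ Λ^M + δ/2 := by
        have := pow_le_pow_of_le_one hΛ0 hΛ1.le (Nat.le_add_right M (k - (K1 + M)))
        linarith
    _ ≤ δ := by linarith

lemma iMap_contract (d : ℕ) (hd2 : 2 ≤ d) (hd7 : d ≤ 7) {c' cg L A : ℝ}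
    (hc'0 : 0 ≤ c') (hc'1 : c' ≤ 1) (hcg0 : 0 ≤ cg) (hcg1 : cg ≤ 1)
    (hL0 : 0 ≤ L) (hL1 : L ≤ 1) (hA0 : 0 ≤ A) (hA1 : A ≤ 1) :
    |(1 + 2 * iMap d c' L)⁻¹ - (1 + 2 * iMap d cg A)⁻¹| ≤
      (199/200)^2 * |(1 + 2*L)⁻¹ - (1 + 2*A)⁻¹| + |c' - cg| := by
  unfold iMap
  have hin : 0 ≤ fMap d (1 + c') L ∧ fMap d (1 + c') L ≤ 1 :=
    ⟨fMap_nonneg d (by linarith) hL0, fMap_le_one d (by linarith) (by linarith) hL0⟩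
  have hin' : 0 ≤ fMap d (1 + cg) A ∧ fMap d (1 + cg) A ≤ 1 :=
    ⟨fMap_nonneg d (by linarith) hA0, fMap_le_one d (by linarith) (by linarith) hA0⟩
  have houter := step_contract d hd2 hd7 (le_refl (1:ℝ)) (by norm_num) (le_refl (1:ℝ))
    (by norm_num) hin.1 hin.2 hin'.1 hin'.2
  have hinner := step_contract d hd2 hd7 (by linarith : (1:ℝ) ≤ 1 + c') (by linarith)
    (by linarith : (1:ℝ) ≤ 1 + cg) (by linarith) hL0 hL1 hA0 hA1
  have habs : |(1:ℝ) - 1| = 0 := by norm_num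
  rw [habs, zero_add] at houter
  have hpar : |(1 + c') - (1 + cg)| = |c' - cg| := by
    congr 1
    ring
  rw [hpar] at hinner
  have hθ : (0:ℝ) ≤ 199/200 := by norm_num
  calc |(1 + 2 * fMap d 1 (fMap d (1 + c') L))⁻¹ - (1 + 2 * fMap d 1 (fMap d (1 + cg) A))⁻¹|
      ≤ 199/200 * |(1 + 2 * fMap d (1 + c') L)⁻¹ - (1 + 2 * fMap d (1 + cg) A)⁻¹| := houter
    _ ≤ 199/200 * (199/200 * (|c' - cg| + |(1 + 2*L)⁻¹ - (1 + 2*A)⁻¹|)) := by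
        apply mul_le_mul_of_nonneg_left hinner hθ
    _ ≤ (199/200)^2 * |(1 + 2*L)⁻¹ - (1 + 2*A)⁻¹| + |c' - cg| := by
        have h1 : (0:ℝ) ≤ |c' - cg| := abs_nonneg _
        nlinarith [abs_nonneg ((1 + 2*L)⁻¹ - (1 + 2*A)⁻¹)]

lemma jMap_contract (d : ℕ) (hd2 : 2 ≤ d) (hd7 : d ≤ 7) {c' cg U B : ℝ}
    (hc'0 : 0 ≤ c') (hc'1 : c' ≤ 1) (hcg0 : 0 ≤ cg) (hcg1 : cg ≤ 1)
    (hU0 : 0 ≤ U) (hU1 : U ≤ 1) (hB0 : 0 ≤ B) (hB1 : B ≤ 1) :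
    |(1 + 2 * jMap d c' U)⁻¹ - (1 + 2 * jMap d cg B)⁻¹| ≤
      (199/200)^2 * |(1 + 2*U)⁻¹ - (1 + 2*B)⁻¹| + |c' - cg| := by
  unfold jMap
  have hin : 0 ≤ fMap d 1 U ∧ fMap d 1 U ≤ 1 :=
    ⟨fMap_nonneg d (by norm_num) hU0, fMap_le_one d (by norm_num) (by norm_num) hU0⟩
  have hin' : 0 ≤ fMap d 1 B ∧ fMap d 1 B ≤ 1 :=
    ⟨fMap_nonneg d (by norm_num) hB0, fMap_le_one d (by norm_num) (by norm_num) hB0⟩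
  have houter := step_contract d hd2 hd7 (by linarith : (1:ℝ) ≤ 1 + c') (by linarith)
    (by linarith : (1:ℝ) ≤ 1 + cg) (by linarith) hin.1 hin.2 hin'.1 hin'.2
  have hinner := step_contract d hd2 hd7 (le_refl (1:ℝ)) (by norm_num) (le_refl (1:ℝ))
    (by norm_num) hU0 hU1 hB0 hB1
  have habs : |(1:ℝ) - 1| = 0 := by norm_num
  rw [habs, zero_add] at hinner
  have hpar : |(1 + c') - (1 + cg)| = |c' - cg| := by
    congr 1
    ring
  rw [hpar] at houter
  have hθ : (0:ℝ) ≤ 199/200 := by norm_num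
  calc |(1 + 2 * fMap d (1 + c') (fMap d 1 U))⁻¹ - (1 + 2 * fMap d (1 + cg) (fMap d 1 B))⁻¹|
      ≤ 199/200 * (|c' - cg| + |(1 + 2 * fMap d 1 U)⁻¹ - (1 + 2 * fMap d 1 B)⁻¹|) := houter
    _ ≤ 199/200 * (|c' - cg| + 199/200 * |(1 + 2*U)⁻¹ - (1 + 2*B)⁻¹|) := by
        apply mul_le_mul_of_nonneg_left ?_ hθ
        linarith [hinner]
    _ ≤ (199/200)^2 * |(1 + 2*U)⁻¹ - (1 + 2*B)⁻¹| + |c' - cg| := by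
        have h1 : (0:ℝ) ≤ |c' - cg| := abs_nonneg _
        nlinarith [abs_nonneg ((1 + 2*U)⁻¹ - (1 + 2*B)⁻¹)]

theorem stmt_15 (d : ℕ) (hd2 : 2 ≤ d) (hd7 : d ≤ 7)
    (cg : ℝ) (hcg : cg ∈ Set.Ioo (0 : ℝ) 1) (hcgfix : gMap d 1 cg = cg)
    (acg : ℝ) (hacg : acg ∈ Set.Ioo (0 : ℝ) 1) (hacgfix : iMap d cg acg = acg)
    (bcg : ℝ) (hbcg : bcg ∈ Set.Ioo (0 : ℝ) 1) (hbcgfix : jMap d cg bcg = bcg)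
    (c : ℝ) (hc0 : 0 ≤ c) (hc1 : c < 1) (x : ℕ → ℝ) (hx : x ∈ Sabc 0 1 c)
    (ε : ℝ) (hε : 0 < ε) :
    ∃ K : ℕ, ∀ k, K ≤ k →
      (acg - ε ≤ (psi d)^[2 * k] x 1 ∧ (psi d)^[2 * k] x 1 ≤ min 1 (bcg + ε)) ∧
      ∀ n, 2 ≤ n → (psi d)^[2 * k] x n ≤ min 1 (cg + ε) := by
  obtain ⟨hcg0, hcg1⟩ := hcg
  obtain ⟨hacg0, hacg1⟩ := hacg
  obtain ⟨hbcg0, hbcg1⟩ := hbcg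
  have hfix : Gm d cg = cg := by rw [← gMap_one_eq]; exact hcgfix
  set Λ : ℝ := (199/200)^2 with hΛ
  have hΛ0 : (0:ℝ) ≤ Λ := by norm_num [hΛ]
  have hΛ1 : Λ < 1 := by norm_num [hΛ]
  set δa : ℝ := 2*ε/9 with hδa
  have hδa0 : 0 < δa := by positivity
  set δc : ℝ := min ((1-Λ)*δa/2) ε with hδc
  have hδc0 : 0 < δc := lt_min (by nlinarith) hε
  obtain ⟨K1, hK1⟩ := Gm_iter_conv d hd2 hcg0 hcg1 hfix hc0 hc1 hδc0
  -- decay for L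
  obtain ⟨KL, hKL⟩ := decay Λ hΛ0 hΛ1
    (fun k => |(1 + 2 * Lseq d c k)⁻¹ - (1 + 2 * acg)⁻¹|)
    (fun k => |(Gm d)^[2*k] c - cg|)
    (fun k => uu_diff_le_one (Lseq_mem d hd2 hc0 hc1 k).1 hacg0.le)
    (fun k => by
      have hmem := Gm_iter_mem d hd2 hc0 hc1 (2*k)
      have hcon := iMap_contract d hd2 hd7 (c' := (Gm d)^[2*k] c) (cg := cg)
        (L := Lseq d c k) (A := acg) hmem.1 hmem.2.le hcg0.le hcg1.le
        (Lseq_mem d hd2 hc0 hc1 k).1 (Lseq_mem d hd2 hc0 hc1 k).2 hacg0.le hacg1.le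
      have heq : Lseq d c (k+1) = iMap d ((Gm d)^[2*k] c) (Lseq d c k) := rfl
      show |(1 + 2 * Lseq d c (k+1))⁻¹ - (1 + 2 * acg)⁻¹| ≤
        Λ * |(1 + 2 * Lseq d c k)⁻¹ - (1 + 2 * acg)⁻¹| + |(Gm d)^[2*k] c - cg|
      rw [heq]
      calc |(1 + 2 * iMap d ((Gm d)^[2*k] c) (Lseq d c k))⁻¹ - (1 + 2 * acg)⁻¹|
          = |(1 + 2 * iMap d ((Gm d)^[2*k] c) (Lseq d c k))⁻¹ - (1 + 2 * iMap d cg acg)⁻¹| := by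
            rw [hacgfix]
        _ ≤ Λ * |(1 + 2 * Lseq d c k)⁻¹ - (1 + 2 * acg)⁻¹| + |(Gm d)^[2*k] c - cg| := by
            rw [hΛ]; exact hcon)
    hδa0 K1
    (fun k hk => by
      have h2k : K1 ≤ 2*k := le_trans hk (by omega)
      have := hK1 (2*k) h2k
      calc |(Gm d)^[2*k] c - cg| ≤ δc := this
        _ ≤ (1-Λ)*δa/2 := min_le_left _ _)
  -- decay for U
  obtain ⟨KU, hKU⟩ := decay Λ hΛ0 hΛ1
    (fun k => |(1 + 2 * Useq d c k)⁻¹ - (1 + 2 * bcg)⁻¹|)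
    (fun k => |(Gm d)^[2*k+1] c - cg|)
    (fun k => uu_diff_le_one (Useq_mem d hd2 hc0 hc1 k).1 hbcg0.le)
    (fun k => by
      have hmem := Gm_iter_mem d hd2 hc0 hc1 (2*k+1)
      have hcon := jMap_contract d hd2 hd7 (c' := (Gm d)^[2*k+1] c) (cg := cg)
        (U := Useq d c k) (B := bcg) hmem.1 hmem.2.le hcg0.le hcg1.le
        (Useq_mem d hd2 hc0 hc1 k).1 (Useq_mem d hd2 hc0 hc1 k).2 hbcg0.le hbcg1.le
      have heq : Useq d c (k+1) = jMap d ((Gm d)^[2*k+1] c) (Useq d c k) := rfl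
      show |(1 + 2 * Useq d c (k+1))⁻¹ - (1 + 2 * bcg)⁻¹| ≤
        Λ * |(1 + 2 * Useq d c k)⁻¹ - (1 + 2 * bcg)⁻¹| + |(Gm d)^[2*k+1] c - cg|
      rw [heq]
      calc |(1 + 2 * jMap d ((Gm d)^[2*k+1] c) (Useq d c k))⁻¹ - (1 + 2 * bcg)⁻¹|
          = |(1 + 2 * jMap d ((Gm d)^[2*k+1] c) (Useq d c k))⁻¹ - (1 + 2 * jMap d cg bcg)⁻¹| := by
            rw [hbcgfix]
        _ ≤ Λ * |(1 + 2 * Useq d c k)⁻¹ - (1 + 2 * bcg)⁻¹| + |(Gm d)^[2*k+1] c - cg| := by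
            rw [hΛ]; exact hcon)
    hδa0 K1
    (fun k hk => by
      have h2k : K1 ≤ 2*k+1 := le_trans hk (by omega)
      have := hK1 (2*k+1) h2k
      calc |(Gm d)^[2*k+1] c - cg| ≤ δc := this
        _ ≤ (1-Λ)*δa/2 := min_le_left _ _)
  refine ⟨max (max KL KU) K1, fun k hk => ?_⟩
  have hkL : KL ≤ k := le_trans (le_trans (le_max_left _ _) (le_max_left _ _)) hk
  have hkU : KU ≤ k := le_trans (le_trans (le_max_right _ _) (le_max_left _ _)) hk
  have hkK1 : K1 ≤ k := le_trans (le_max_right _ _) hk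
  have hXmem : (psi d)^[2*k] x ∈ Sabc 0 1 ((Gm d)^[2*k] c) :=
    psi_iter_mem d hd2 hc0 hc1 hx (2*k)
  have hsand := sandwich d hd2 hc0 hc1 hx k
  have hLmem := Lseq_mem d hd2 hc0 hc1 k
  have hUmem := Useq_mem d hd2 hc0 hc1 k
  -- L close to acg
  have hLclose : |Lseq d c k - acg| ≤ ε := by
    have h1 := dist_of_uu hLmem.1 hLmem.2 hacg0.le hacg1.le
    have h2 := hKL k hkL
    calc |Lseq d c k - acg| ≤ 9/2 * |(1 + 2 * Lseq d c k)⁻¹ - (1 + 2 * acg)⁻¹| := h1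
      _ ≤ 9/2 * δa := by linarith
      _ = ε := by rw [hδa]; ring
  have hUclose : |Useq d c k - bcg| ≤ ε := by
    have h1 := dist_of_uu hUmem.1 hUmem.2 hbcg0.le hbcg1.le
    have h2 := hKU k hkU
    calc |Useq d c k - bcg| ≤ 9/2 * |(1 + 2 * Useq d c k)⁻¹ - (1 + 2 * bcg)⁻¹| := h1
      _ ≤ 9/2 * δa := by linarith
      _ = ε := by rw [hδa]; ring
  have h2k : K1 ≤ 2*k := le_trans hkK1 (by omega)
  have hcclose : |(Gm d)^[2*k] c - cg| ≤ ε := le_trans (hK1 (2*k) h2k) (min_le_right _ _)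
  have hck := Gm_iter_mem d hd2 hc0 hc1 (2*k)
  refine ⟨⟨?_, ?_⟩, ?_⟩
  · -- lower bound
    have h1 : acg - ε ≤ Lseq d c k := by
      have := abs_le.mp hLclose
      linarith [this.1]
    exact le_trans h1 hsand.1
  · -- upper bound
    apply le_min hXmem.2.2.1
    have h1 : Useq d c k ≤ bcg + ε := by
      have := abs_le.mp hUclose
      linarith [this.1]
    exact le_trans hsand.2 h1
  · -- tail
    intro n hn
    have h1 : (psi d)^[2*k] x n ≤ (Gm d)^[2*k] c := hXmem.2.2.2 n hn
    apply le_min (le_trans h1 hck.2.le)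
    have h2 := abs_le.mp hcclose
    linarith [h2.1]
end

section
/- (CBC) If κ and κ' are admissible boundary conditions with κ' dominating κ, then for every increasing function Φ : (V → ℤ) → ℝ one has |L(κ)| · Σ_{h ∈ L(κ')} Φ(h) ≥ |L(κ')| · Σ_{h ∈ L(κ)} Φ(h). (FKG) If κ is an admissible boundary condition, then for any two increasing functions Φ, Ψ : (V → ℤ) → ℝ one has |L(κ)| · Σ_{h ∈ L(κ)} Φ(h)·Ψ(h) ≥ (Σ_{h ∈ L(κ)} Φ(h)) · (Σ_{h ∈ L(κ)} Ψ(h)). -/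
/-- The set of 1-Lipschitz integer-valued functions on the vertices of `G`
respecting the boundary condition `κ` on the boundary set `B`. -/
def LipBC {V : Type*} (G : SimpleGraph V) (B : Set V) (κ : V → Set ℤ) : Set (V → ℤ) :=
  {h | (∀ u v : V, G.Adj u v → |h u - h v| ≤ 1) ∧ ∀ v ∈ B, h v ∈ κ v}

/-- A boundary condition is admissible if the corresponding set of Lipschitz
functions is finite and nonempty. -/
def Admissible {V : Type*} (G : SimpleGraph V) (B : Set V) (κ : V → Set ℤ) : Prop :=
  (LipBC G B κ).Finite ∧ (LipBC G B κ).Nonempty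

/-- `κ'` dominates `κ` on the boundary `B`. -/
def Dominates {V : Type*} (B : Set V) (κ κ' : V → Set ℤ) : Prop :=
  ∀ v ∈ B, (∀ a ∈ κ v, ∃ a' ∈ κ' v, a ≤ a') ∧ (∀ a' ∈ κ' v, ∃ a ∈ κ v, a ≤ a')

/-- Closure of Lipschitz sets under pointwise lattice operations, given domination. -/
lemma lipBC_inf_sup_mem {V : Type*} (G : SimpleGraph V) (B : Set V) (κ κ' : V → Set ℤ)
    (hκI : ∀ v ∈ B, (κ v).Nonempty ∧ (κ v).OrdConnected)
    (hκ'I : ∀ v ∈ B, (κ' v).Nonempty ∧ (κ' v).OrdConnected)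
    (hdom : Dominates B κ κ')
    (h g : V → ℤ) (hh : h ∈ LipBC G B κ) (hg : g ∈ LipBC G B κ') :
    h ⊓ g ∈ LipBC G B κ ∧ h ⊔ g ∈ LipBC G B κ' := by
  obtain ⟨hL, hB⟩ := hh
  obtain ⟨gL, gB⟩ := hg
  constructor
  · constructor
    · intro u v huv
      have := abs_min_sub_min_le_max (h u) (g u) (h v) (g v)
      simp only [Pi.inf_apply]
      exact this.trans (max_le (hL u v huv) (gL u v huv))
    · intro v hv
      simp only [Pi.inf_apply]
      rcases le_total (h v) (g v) with hle | hle
      · rw [min_eq_left hle]; exact hB v hv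
      · rw [min_eq_right hle]
        obtain ⟨a, ha, hale⟩ := (hdom v hv).2 (g v) (gB v hv)
        exact (hκI v hv).2.out ha (hB v hv) ⟨hale, hle⟩
  · constructor
    · intro u v huv
      have := abs_max_sub_max_le_max (h u) (g u) (h v) (g v)
      simp only [Pi.sup_apply]
      exact this.trans (max_le (hL u v huv) (gL u v huv))
    · intro v hv
      simp only [Pi.sup_apply]
      rcases le_total (h v) (g v) with hle | hle
      · rw [max_eq_right hle]; exact gB v hv
      · rw [max_eq_left hle]
        obtain ⟨a', ha', hale⟩ := (hdom v hv).1 (h v) (hB v hv)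
        exact (hκ'I v hv).2.out (gB v hv) ha' ⟨hle, hale⟩

lemma dominates_refl {V : Type*} (B : Set V) (κ : V → Set ℤ) : Dominates B κ κ :=
  fun _ _ => ⟨fun a ha => ⟨a, ha, le_rfl⟩, fun a ha => ⟨a, ha, le_rfl⟩⟩

open scoped FinsetFamily

theorem stmt_19 {V : Type*} [Fintype V] (G : SimpleGraph V) (B : Set V)
    (κ κ' : V → Set ℤ)
    (hκI : ∀ v ∈ B, (κ v).Nonempty ∧ (κ v).OrdConnected)
    (hκ'I : ∀ v ∈ B, (κ' v).Nonempty ∧ (κ' v).OrdConnected)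
    (hκ : Admissible G B κ) (hκ' : Admissible G B κ')
    (hdom : Dominates B κ κ') :
    (∀ Φ : (V → ℤ) → ℝ, Monotone Φ →
      (Nat.card (LipBC G B κ') : ℝ) * ∑ᶠ h ∈ LipBC G B κ, Φ h ≤
        (Nat.card (LipBC G B κ) : ℝ) * ∑ᶠ h ∈ LipBC G B κ', Φ h) ∧
    (∀ Φ Ψ : (V → ℤ) → ℝ, Monotone Φ → Monotone Ψ →
      (∑ᶠ h ∈ LipBC G B κ, Φ h) * ∑ᶠ h ∈ LipBC G B κ, Ψ h ≤
        (Nat.card (LipBC G B κ) : ℝ) * ∑ᶠ h ∈ LipBC G B κ, Φ h * Ψ h) := by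
  classical
  obtain ⟨hfin, hne⟩ := hκ
  obtain ⟨hfin', hne'⟩ := hκ'
  set A : Finset (V → ℤ) := hfin.toFinset with hAdef
  set A' : Finset (V → ℤ) := hfin'.toFinset with hA'def
  have hmemA : ∀ h, h ∈ A ↔ h ∈ LipBC G B κ := fun h => hfin.mem_toFinset
  have hmemA' : ∀ h, h ∈ A' ↔ h ∈ LipBC G B κ' := fun h => hfin'.mem_toFinset
  have hAne : A.Nonempty := by obtain ⟨h, hh⟩ := hne; exact ⟨h, (hmemA h).2 hh⟩
  have hsumA : ∀ f : (V → ℤ) → ℝ, ∑ᶠ h ∈ LipBC G B κ, f h = ∑ h ∈ A, f h := by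
    intro f; rw [← hfin.coe_toFinset, finsum_mem_coe_finset]
  have hsumA' : ∀ f : (V → ℤ) → ℝ, ∑ᶠ h ∈ LipBC G B κ', f h = ∑ h ∈ A', f h := by
    intro f; rw [← hfin'.coe_toFinset, finsum_mem_coe_finset]
  have hcardA : (Nat.card (LipBC G B κ) : ℝ) = (A.card : ℝ) := by
    rw [Nat.card_coe_set_eq, Set.ncard_eq_toFinset_card _ hfin]
  have hcardA' : (Nat.card (LipBC G B κ') : ℝ) = (A'.card : ℝ) := by
    rw [Nat.card_coe_set_eq, Set.ncard_eq_toFinset_card _ hfin']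
  constructor
  · -- CBC
    intro Φ hΦ
    rw [hsumA, hsumA', hcardA, hcardA']
    have hUne : (A ∪ A').Nonempty := hAne.mono Finset.subset_union_left
    set m : ℝ := (A ∪ A').inf' hUne Φ with hmdef
    have hm : ∀ h ∈ A ∪ A', m ≤ Φ h := fun h hh => Finset.inf'_le _ hh
    set Φ' : (V → ℤ) → ℝ := fun h => max (Φ h) m - m with hΦ'def
    have hΦ'0 : (0 : (V → ℤ) → ℝ) ≤ Φ' := fun h => sub_nonneg.2 (le_max_right _ _)
    have hΦ'mono : Monotone Φ' := fun a b hab =>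
      sub_le_sub_right (max_le_max (hΦ hab) le_rfl) _
    have hΦ'eqA : ∀ h ∈ A, Φ' h = Φ h - m := fun h hh => by
      simp [hΦ'def, max_eq_left (hm h (Finset.mem_union_left _ hh))]
    have hΦ'eqA' : ∀ h ∈ A', Φ' h = Φ h - m := fun h hh => by
      simp [hΦ'def, max_eq_left (hm h (Finset.mem_union_right _ hh))]
    have key := four_functions_theorem Φ' (1 : (V → ℤ) → ℝ) (1 : (V → ℤ) → ℝ) Φ'
      hΦ'0 zero_le_one zero_le_one hΦ'0
      (fun a b => by
        simpa using hΦ'mono (le_sup_left : a ≤ a ⊔ b)) A A'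
    simp only [Pi.one_apply] at key
    have hinfs : A ⊼ A' ⊆ A := by
      intro x hx
      rw [Finset.mem_infs] at hx
      obtain ⟨a, ha, b, hb, rfl⟩ := hx
      exact (hmemA _).2
        (lipBC_inf_sup_mem G B κ κ' hκI hκ'I hdom a b ((hmemA a).1 ha) ((hmemA' b).1 hb)).1
    have hsups : A ⊻ A' ⊆ A' := by
      intro x hx
      rw [Finset.mem_sups] at hx
      obtain ⟨a, ha, b, hb, rfl⟩ := hx
      exact (hmemA' _).2
        (lipBC_inf_sup_mem G B κ κ' hκI hκ'I hdom a b ((hmemA a).1 ha) ((hmemA' b).1 hb)).2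
    have key2 : (∑ a ∈ A, Φ' a) * (A'.card : ℝ) ≤ (A.card : ℝ) * ∑ a ∈ A', Φ' a := by
      have e1 : ∑ a ∈ A', (1 : ℝ) = (A'.card : ℝ) := by simp
      have e2 : ∑ a ∈ A ⊼ A', (1 : ℝ) = ((A ⊼ A').card : ℝ) := by simp
      rw [e1, e2] at key
      refine key.trans (mul_le_mul ?_ ?_ ?_ (Nat.cast_nonneg _))
      · exact_mod_cast Finset.card_le_card hinfs
      · exact Finset.sum_le_sum_of_subset_of_nonneg hsups (fun i _ _ => hΦ'0 i)
      · exact Finset.sum_nonneg fun i _ => hΦ'0 i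
    have eA : ∑ a ∈ A, Φ' a = ∑ a ∈ A, Φ a - (A.card : ℝ) * m := by
      rw [Finset.sum_congr rfl hΦ'eqA, Finset.sum_sub_distrib, Finset.sum_const,
        nsmul_eq_mul]
    have eA' : ∑ a ∈ A', Φ' a = ∑ a ∈ A', Φ a - (A'.card : ℝ) * m := by
      rw [Finset.sum_congr rfl hΦ'eqA', Finset.sum_sub_distrib, Finset.sum_const,
        nsmul_eq_mul]
    rw [eA, eA'] at key2
    nlinarith [key2]
  · -- FKG
    intro Φ Ψ hΦ hΨ
    rw [hsumA, hsumA, hsumA, hcardA]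
    set m : ℝ := A.inf' hAne Φ with hmdef
    set n : ℝ := A.inf' hAne Ψ with hndef
    have hm : ∀ h ∈ A, m ≤ Φ h := fun h hh => Finset.inf'_le _ hh
    have hn : ∀ h ∈ A, n ≤ Ψ h := fun h hh => Finset.inf'_le _ hh
    set Φ' : (V → ℤ) → ℝ := fun h => max (Φ h) m - m with hΦ'def
    set Ψ' : (V → ℤ) → ℝ := fun h => max (Ψ h) n - n with hΨ'def
    have hΦ'0 : (0 : (V → ℤ) → ℝ) ≤ Φ' := fun h => sub_nonneg.2 (le_max_right _ _)
    have hΨ'0 : (0 : (V → ℤ) → ℝ) ≤ Ψ' := fun h => sub_nonneg.2 (le_max_right _ _)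
    have hΦ'mono : Monotone Φ' := fun a b hab =>
      sub_le_sub_right (max_le_max (hΦ hab) le_rfl) _
    have hΨ'mono : Monotone Ψ' := fun a b hab =>
      sub_le_sub_right (max_le_max (hΨ hab) le_rfl) _
    have hΦ'eq : ∀ h ∈ A, Φ' h = Φ h - m := fun h hh => by
      simp [hΦ'def, max_eq_left (hm h hh)]
    have hΨ'eq : ∀ h ∈ A, Ψ' h = Ψ h - n := fun h hh => by
      simp [hΨ'def, max_eq_left (hn h hh)]
    have key := four_functions_theorem Φ' Ψ' (1 : (V → ℤ) → ℝ) (fun h => Φ' h * Ψ' h)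
      hΦ'0 hΨ'0 zero_le_one (fun h => mul_nonneg (hΦ'0 h) (hΨ'0 h))
      (fun a b => by
        simpa using mul_le_mul (hΦ'mono (le_sup_left : a ≤ a ⊔ b))
          (hΨ'mono (le_sup_right : b ≤ a ⊔ b)) (hΨ'0 b) (hΦ'0 _)) A A
    simp only [Pi.one_apply] at key
    have hinfs : A ⊼ A ⊆ A := by
      intro x hx
      rw [Finset.mem_infs] at hx
      obtain ⟨a, ha, b, hb, rfl⟩ := hx
      exact (hmemA _).2
        (lipBC_inf_sup_mem G B κ κ hκI hκI (dominates_refl B κ) a b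
          ((hmemA a).1 ha) ((hmemA b).1 hb)).1
    have hsups : A ⊻ A ⊆ A := by
      intro x hx
      rw [Finset.mem_sups] at hx
      obtain ⟨a, ha, b, hb, rfl⟩ := hx
      exact (hmemA _).2
        (lipBC_inf_sup_mem G B κ κ hκI hκI (dominates_refl B κ) a b
          ((hmemA a).1 ha) ((hmemA b).1 hb)).2
    have key2 : (∑ a ∈ A, Φ' a) * (∑ a ∈ A, Ψ' a) ≤
        (A.card : ℝ) * ∑ a ∈ A, Φ' a * Ψ' a := by
      have e2 : ∑ a ∈ A ⊼ A, (1 : ℝ) = ((A ⊼ A).card : ℝ) := by simp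
      rw [e2] at key
      refine key.trans (mul_le_mul ?_ ?_ ?_ (Nat.cast_nonneg _))
      · exact_mod_cast Finset.card_le_card hinfs
      · exact Finset.sum_le_sum_of_subset_of_nonneg hsups
          (fun i _ _ => mul_nonneg (hΦ'0 i) (hΨ'0 i))
      · exact Finset.sum_nonneg fun i _ => mul_nonneg (hΦ'0 i) (hΨ'0 i)
    have eΦ : ∑ a ∈ A, Φ' a = ∑ a ∈ A, Φ a - (A.card : ℝ) * m := by
      rw [Finset.sum_congr rfl hΦ'eq, Finset.sum_sub_distrib, Finset.sum_const, nsmul_eq_mul]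
    have eΨ : ∑ a ∈ A, Ψ' a = ∑ a ∈ A, Ψ a - (A.card : ℝ) * n := by
      rw [Finset.sum_congr rfl hΨ'eq, Finset.sum_sub_distrib, Finset.sum_const, nsmul_eq_mul]
    have eΦΨ : ∑ a ∈ A, Φ' a * Ψ' a =
        ∑ a ∈ A, Φ a * Ψ a - n * ∑ a ∈ A, Φ a - m * ∑ a ∈ A, Ψ a + (A.card : ℝ) * (m * n) := by
      have hpt : ∀ h ∈ A, Φ' h * Ψ' h = Φ h * Ψ h - n * Φ h - m * Ψ h + m * n := by
        intro h hh; rw [hΦ'eq h hh, hΨ'eq h hh]; ring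
      rw [Finset.sum_congr rfl hpt]
      rw [Finset.sum_add_distrib, Finset.sum_sub_distrib, Finset.sum_sub_distrib,
        ← Finset.mul_sum, ← Finset.mul_sum, Finset.sum_const, nsmul_eq_mul]
    rw [eΦ, eΨ, eΦΨ] at key2
    nlinarith [key2]
end
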